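/- In the discrete-time right-censored setting, define D^R = Σ_{s ≤ t} ((2Z−1)/γ(Z|X)) · ((1 − F(t|Z,X))/((1 − F(s|Z,X)) G(s−|Z,X))) · (dN(s) − 1(T̃ ≥ s)λ(s|Z,X)), where F is the conditional CIF of T given (Z,X), G the conditional survival of C given (Z,X), λ the conditional hazard of T, and γ(z|X)=P(Z=z|X)∈(0,1). Assume T ⊥ C | (Z,X) and G(s−|Z,X) > 0, F(s|Z,X) < 1 for s ≤ t. Then E(D^R | Z, X) = 0 a.s., and hence E(D^R) = 0. -/

import Mathlib

open MeasureTheory ProbabilityTheory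

/-- The outcome augmentation term `D^R` of the efficient influence function has
conditional mean zero given `(Z,X)`, hence mean zero.  Discrete-time right-censored
setting: `T̃ = min(T,C)`, `dN(s) = 1(T̃ = s, T ≤ C)`, `F(s|Z,X) = P(T ≤ s|Z,X)`,
`G(s−|Z,X) = P(C ≥ s|Z,X)`, hazard `λ(s|Z,X)` with
`λ(s|Z,X)·P(T ≥ s|Z,X) = P(T = s|Z,X)`, instrument prevalence
`γ(z|X) = P(Z=z|X) ∈ (0,1)`, and `T ⊥ C | (Z,X)`. -/
theorem outcome_augmentation_mean_zero
    {Ω : Type*} [mΩ : MeasurableSpace Ω] [StandardBorelSpace Ω] [Nonempty Ω]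
    (μ : Measure Ω) [IsProbabilityMeasure μ]
    (T C : Ω → ℕ) (Z X : Ω → ℝ) (t : ℕ)
    (hT : Measurable T) (hC : Measurable C) (hZ : Measurable Z) (hX : Measurable X)
    (hZbin : ∀ ω, Z ω = 0 ∨ Z ω = 1)
    (hZXle : MeasurableSpace.comap (fun ω => (Z ω, X ω)) inferInstance ≤ mΩ)
    -- noninformative censoring given (Z,X)
    (hindep : CondIndepFun (MeasurableSpace.comap (fun ω => (Z ω, X ω)) inferInstance)
      hZXle T C μ)
    -- conditional CIF F(s|Z,X) = P(T ≤ s | Z,X)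
    (F : ℕ → ℝ × ℝ → ℝ)
    (hF : ∀ s : ℕ, (fun ω => F s (Z ω, X ω)) =ᵐ[μ]
      μ[fun ω => if T ω ≤ s then (1 : ℝ) else 0|
        MeasurableSpace.comap (fun ω => (Z ω, X ω)) inferInstance])
    -- left-limit censoring survival G(s−|Z,X) = P(C ≥ s | Z,X)
    (Gm : ℕ → ℝ × ℝ → ℝ)
    (hGm : ∀ s : ℕ, (fun ω => Gm s (Z ω, X ω)) =ᵐ[μ]
      μ[fun ω => if s ≤ C ω then (1 : ℝ) else 0|
        MeasurableSpace.comap (fun ω => (Z ω, X ω)) inferInstance])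
    -- discrete hazard λ(s|Z,X) : λ·P(T ≥ s|Z,X) = P(T = s|Z,X)
    (lam : ℕ → ℝ × ℝ → ℝ)
    (hlam : ∀ s : ℕ,
      (fun ω => lam s (Z ω, X ω) *
          ((μ[fun ω' => if s ≤ T ω' then (1 : ℝ) else 0|
            MeasurableSpace.comap (fun ω' => (Z ω', X ω')) inferInstance]) ω)) =ᵐ[μ]
        μ[fun ω => if T ω = s then (1 : ℝ) else 0|
          MeasurableSpace.comap (fun ω => (Z ω, X ω)) inferInstance])
    -- instrument prevalence γ(1|X) = P(Z=1|X) ∈ (0,1)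
    (g1 : ℝ → ℝ)
    (hg1 : (fun ω => g1 (X ω)) =ᵐ[μ]
      μ[fun ω => if Z ω = 1 then (1 : ℝ) else 0|MeasurableSpace.comap X inferInstance])
    (hgpos : ∀ᵐ ω ∂μ, 0 < g1 (X ω) ∧ g1 (X ω) < 1)
    -- positivity: G(s−|Z,X) > 0 and F(s|Z,X) < 1 for s ≤ t
    (hpos : ∀ᵐ ω ∂μ, ∀ s ≤ t, 0 < Gm s (Z ω, X ω) ∧ F s (Z ω, X ω) < 1)
    -- the outcome augmentation term D^R
    (DR : Ω → ℝ)
    (hDR : ∀ ω, DR ω =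
      ∑ s ∈ Finset.range (t + 1),
        (2 * Z ω - 1) / (if Z ω = 1 then g1 (X ω) else 1 - g1 (X ω)) *
          ((1 - F t (Z ω, X ω)) / ((1 - F s (Z ω, X ω)) * Gm s (Z ω, X ω))) *
          ((if min (T ω) (C ω) = s ∧ T ω ≤ C ω then (1 : ℝ) else 0) -
            (if s ≤ min (T ω) (C ω) then (1 : ℝ) else 0) * lam s (Z ω, X ω))) :
    (μ[DR|MeasurableSpace.comap (fun ω => (Z ω, X ω)) inferInstance] =ᵐ[μ]
        fun _ => (0 : ℝ)) ∧
      ∫ ω, DR ω ∂μ = 0 := by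
    classical
  set m := MeasurableSpace.comap (fun ω => (Z ω, X ω)) inferInstance with hm_def
  have hm : m ≤ mΩ := hZXle
  by_cases h_int : Integrable DR μ
  swap
  · exact ⟨by rw [condExp_of_not_integrable h_int]; exact ae_of_all _ fun _ => rfl, integral_undef h_int⟩
  -- measurability preliminaries
  have hpm : Measurable[m] fun ω => (Z ω, X ω) := Measurable.of_comap_le le_rfl
  have hZm : Measurable[m] Z := measurable_fst.comp hpm
  have hXle : MeasurableSpace.comap X inferInstance ≤ m := by
    rintro s ⟨u, hu, rfl⟩
    exact ⟨Prod.snd ⁻¹' u, measurable_snd hu, rfl⟩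
  -- integrability helpers
  have intB : ∀ (f : Ω → ℝ) (c : ℝ), AEStronglyMeasurable[mΩ] f μ →
      (∀ᵐ ω ∂μ, |f ω| ≤ c) → Integrable f μ := by
    intro f c hf hb
    refine (integrable_const c).mono' hf ?_
    filter_upwards [hb] with ω h using by simpa [Real.norm_eq_abs] using h
  have intInd : ∀ (P : Ω → Prop) [DecidablePred P], MeasurableSet[mΩ] {ω | P ω} →
      Integrable (fun ω => if P ω then (1:ℝ) else 0) μ := by
    intro P inst hP
    have hmeas : Measurable[mΩ] fun ω => if P ω then (1:ℝ) else 0 :=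
      Measurable.ite hP measurable_const measurable_const
    refine intB _ 1 (hmeas.aestronglyMeasurable (μ := μ)) ?_
    refine ae_of_all _ fun ω => ?_
    by_cases h : P ω <;> simp [h]
  -- the conditional-independence product identities
  have hprod := (condIndepFun_iff_condExp_inter_preimage_eq_mul (hm' := hZXle) hT hC).mp hindep
  have hNs : ∀ s : ℕ, μ[(fun ω => if T ω = s ∧ s ≤ C ω then (1:ℝ) else 0)|m] =ᵐ[μ]
      fun ω => (μ[fun ω => if T ω = s then (1:ℝ) else 0|m]) ω *
        (μ[fun ω => if s ≤ C ω then (1:ℝ) else 0|m]) ω := by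
    intro s
    have h := hprod {s} (Set.Ici s) (measurableSet_singleton s) measurableSet_Ici
    have e1 : (Set.indicator (T ⁻¹' {s} ∩ C ⁻¹' Set.Ici s) fun _ => (1:ℝ)) =
        fun ω => if T ω = s ∧ s ≤ C ω then (1:ℝ) else 0 := by
      ext ω
      by_cases hh : T ω = s ∧ s ≤ C ω <;>
        simp [Set.indicator_apply, Set.mem_inter_iff, Set.mem_preimage, Set.mem_Ici, hh]
    have e2 : (Set.indicator (T ⁻¹' {s}) fun _ => (1:ℝ)) =
        fun ω => if T ω = s then (1:ℝ) else 0 := by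
      ext ω; by_cases hh : T ω = s <;> simp [Set.indicator_apply, hh]
    have e3 : (Set.indicator (C ⁻¹' Set.Ici s) fun _ => (1:ℝ)) =
        fun ω => if s ≤ C ω then (1:ℝ) else 0 := by
      ext ω; by_cases hh : s ≤ C ω <;> simp [Set.indicator_apply, Set.mem_Ici, hh]
    rw [e1, e2, e3] at h
    exact h
  have hIs : ∀ s : ℕ, μ[(fun ω => if s ≤ T ω ∧ s ≤ C ω then (1:ℝ) else 0)|m] =ᵐ[μ]
      fun ω => (μ[fun ω => if s ≤ T ω then (1:ℝ) else 0|m]) ω *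
        (μ[fun ω => if s ≤ C ω then (1:ℝ) else 0|m]) ω := by
    intro s
    have h := hprod (Set.Ici s) (Set.Ici s) measurableSet_Ici measurableSet_Ici
    have e1 : (Set.indicator (T ⁻¹' Set.Ici s ∩ C ⁻¹' Set.Ici s) fun _ => (1:ℝ)) =
        fun ω => if s ≤ T ω ∧ s ≤ C ω then (1:ℝ) else 0 := by
      ext ω
      by_cases hh : s ≤ T ω ∧ s ≤ C ω <;>
        simp [Set.indicator_apply, Set.mem_inter_iff, Set.mem_preimage, Set.mem_Ici, hh]
    have e2 : (Set.indicator (T ⁻¹' Set.Ici s) fun _ => (1:ℝ)) =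
        fun ω => if s ≤ T ω then (1:ℝ) else 0 := by
      ext ω; by_cases hh : s ≤ T ω <;> simp [Set.indicator_apply, Set.mem_Ici, hh]
    have e3 : (Set.indicator (C ⁻¹' Set.Ici s) fun _ => (1:ℝ)) =
        fun ω => if s ≤ C ω then (1:ℝ) else 0 := by
      ext ω; by_cases hh : s ≤ C ω <;> simp [Set.indicator_apply, Set.mem_Ici, hh]
    rw [e1, e2, e3] at h
    exact h
  -- integrability of specific indicators
  have intN : ∀ s:ℕ, Integrable (fun ω => if T ω = s ∧ s ≤ C ω then (1:ℝ) else 0) μ :=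
    fun s => intInd _ ((hT (measurableSet_singleton s)).inter (hC measurableSet_Ici))
  have intI : ∀ s:ℕ, Integrable (fun ω => if s ≤ T ω ∧ s ≤ C ω then (1:ℝ) else 0) μ :=
    fun s => intInd _ ((hT measurableSet_Ici).inter (hC measurableSet_Ici))
  have intLe : ∀ s:ℕ, Integrable (fun ω => if T ω ≤ s then (1:ℝ) else 0) μ :=
    fun s => intInd _ (hT measurableSet_Iic)
  have intGe : ∀ s:ℕ, Integrable (fun ω => if s ≤ T ω then (1:ℝ) else 0) μ :=
    fun s => intInd _ (hT measurableSet_Ici)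
  have intEq : ∀ s:ℕ, Integrable (fun ω => if T ω = s then (1:ℝ) else 0) μ :=
    fun s => intInd _ (hT (measurableSet_singleton s))
  have intC : ∀ s:ℕ, Integrable (fun ω => if s ≤ C ω then (1:ℝ) else 0) μ :=
    fun s => intInd _ (hC measurableSet_Ici)
  -- positivity of the conditional survival of T
  have hGepos : ∀ᵐ ω ∂μ, ∀ s, s ≤ t →
      0 < (μ[fun ω' => if s ≤ T ω' then (1:ℝ) else 0|m]) ω := by
    rw [ae_all_iff]
    intro s
    rcases Nat.eq_zero_or_pos s with hs0 | hspos
    · subst hs0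
      have e : (fun ω' => if 0 ≤ T ω' then (1:ℝ) else 0) = fun _ => (1:ℝ) := by
        ext ω'; simp
      rw [e, condExp_const hm]
      exact ae_of_all _ fun ω _ => one_pos
    · obtain ⟨k, rfl⟩ : ∃ k, s = k + 1 := ⟨s - 1, by omega⟩
      have e : (fun ω' => if k+1 ≤ T ω' then (1:ℝ) else 0) =
          (fun _ => (1:ℝ)) - fun ω' => if T ω' ≤ k then (1:ℝ) else 0 := by
        ext ω'; simp only [Pi.sub_apply]
        by_cases h : T ω' ≤ k
        · rw [if_pos h, if_neg (by omega)]; norm_num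
        · rw [if_neg h, if_pos (by omega)]; norm_num
      rw [e]
      filter_upwards [condExp_sub (integrable_const 1) (intLe k) m, hF k, hpos] with ω h1 h2 h3 hkt
      rw [h1]
      simp only [Pi.sub_apply, condExp_const hm]
      have h4 := (h3 k (by omega)).2
      rw [h2] at h4
      linarith
  -- bounds on conditional probabilities
  have hEq_nonneg : ∀ s:ℕ, 0 ≤ᵐ[μ] μ[fun ω => if T ω = s then (1:ℝ) else 0|m] :=
    fun s => condExp_nonneg (ae_of_all _ fun ω => by
      by_cases h : T ω = s <;> simp [h])
  have hEq_le : ∀ s:ℕ, μ[fun ω => if T ω = s then (1:ℝ) else 0|m] ≤ᵐ[μ]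
      μ[fun ω => if s ≤ T ω then (1:ℝ) else 0|m] := by
    intro s
    refine condExp_mono (intEq s) (intGe s) (ae_of_all _ fun ω => ?_)
    show (if T ω = s then (1:ℝ) else 0) ≤ (if s ≤ T ω then (1:ℝ) else 0)
    split_ifs with h1 h2
    · norm_num
    · exact (h2 (le_of_eq h1.symm)).elim
    · norm_num
    · norm_num
  -- facts about the hazard ratio L s = cEq/cGe
  have hLfacts : ∀ᵐ ω ∂μ, ∀ s, s ≤ t →
      |(μ[fun ω' => if T ω' = s then (1:ℝ) else 0|m]) ω /
        (μ[fun ω' => if s ≤ T ω' then (1:ℝ) else 0|m]) ω| ≤ 1 ∧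
      (μ[fun ω' => if T ω' = s then (1:ℝ) else 0|m]) ω /
        (μ[fun ω' => if s ≤ T ω' then (1:ℝ) else 0|m]) ω *
        (μ[fun ω' => if s ≤ T ω' then (1:ℝ) else 0|m]) ω =
        (μ[fun ω' => if T ω' = s then (1:ℝ) else 0|m]) ω := by
    rw [ae_all_iff]
    intro s
    filter_upwards [hGepos, hEq_nonneg s, hEq_le s] with ω h1 h2 h3 hst
    have hp := h1 s hst
    have h2' : (0:ℝ) ≤ (μ[fun ω' => if T ω' = s then (1:ℝ) else 0|m]) ω := by simpa using h2
    constructor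
    · rw [abs_div, abs_of_nonneg h2', abs_of_nonneg hp.le]
      exact (div_le_one hp).mpr h3
    · exact div_mul_cancel₀ _ (ne_of_gt hp)
  -- the hazard function agrees a.e. with the ratio
  have hlamL : ∀ᵐ ω ∂μ, ∀ s, s ≤ t → lam s (Z ω, X ω) =
      (μ[fun ω' => if T ω' = s then (1:ℝ) else 0|m]) ω /
      (μ[fun ω' => if s ≤ T ω' then (1:ℝ) else 0|m]) ω := by
    rw [ae_all_iff]
    intro s
    filter_upwards [hlam s, hGepos] with ω h1 h2 hst
    have hp := h2 s hst
    rw [eq_div_iff (ne_of_gt hp)]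
    exact h1
  -- the martingale increment and the weight
  set M : ℕ → Ω → ℝ := fun s ω =>
    (if T ω = s ∧ s ≤ C ω then (1:ℝ) else 0) -
      (if s ≤ T ω ∧ s ≤ C ω then (1:ℝ) else 0) *
        ((μ[fun ω' => if T ω' = s then (1:ℝ) else 0|m]) ω /
         (μ[fun ω' => if s ≤ T ω' then (1:ℝ) else 0|m]) ω) with hM_def
  set W : ℕ → Ω → ℝ := fun s ω =>
    (2 * Z ω - 1) /
      (if Z ω = 1 then
        (μ[fun ω' => if Z ω' = 1 then (1:ℝ) else 0|MeasurableSpace.comap X inferInstance]) ω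
       else 1 -
        (μ[fun ω' => if Z ω' = 1 then (1:ℝ) else 0|MeasurableSpace.comap X inferInstance]) ω) *
      ((1 - (μ[fun ω' => if T ω' ≤ t then (1:ℝ) else 0|m]) ω) /
        ((1 - (μ[fun ω' => if T ω' ≤ s then (1:ℝ) else 0|m]) ω) *
          (μ[fun ω' => if s ≤ C ω' then (1:ℝ) else 0|m]) ω)) with hW_def
  -- conditional mean zero of the martingale increment
  have hM0 : ∀ s, s ≤ t → μ[M s|m] =ᵐ[μ] fun _ => (0:ℝ) := by
    intro s hst
    have hLsm : StronglyMeasurable[m] fun ω =>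
        (μ[fun ω' => if T ω' = s then (1:ℝ) else 0|m]) ω /
        (μ[fun ω' => if s ≤ T ω' then (1:ℝ) else 0|m]) ω :=
      (stronglyMeasurable_condExp.measurable.div
        stronglyMeasurable_condExp.measurable).stronglyMeasurable
    have hLb : ∀ᵐ ω ∂μ,
        |(μ[fun ω' => if T ω' = s then (1:ℝ) else 0|m]) ω /
         (μ[fun ω' => if s ≤ T ω' then (1:ℝ) else 0|m]) ω| ≤ 1 := by
      filter_upwards [hLfacts] with ω h using (h s hst).1
    have intIL : Integrable (fun ω => (if s ≤ T ω ∧ s ≤ C ω then (1:ℝ) else 0) *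
        ((μ[fun ω' => if T ω' = s then (1:ℝ) else 0|m]) ω /
         (μ[fun ω' => if s ≤ T ω' then (1:ℝ) else 0|m]) ω)) μ := by
      refine intB _ 1 ?_ ?_
      · have h1 : Measurable[mΩ] fun ω => if s ≤ T ω ∧ s ≤ C ω then (1:ℝ) else 0 :=
          Measurable.ite ((hT measurableSet_Ici).inter (hC measurableSet_Ici))
            measurable_const measurable_const
        have h2 : Measurable[mΩ] fun ω =>
            (μ[fun ω' => if T ω' = s then (1:ℝ) else 0|m]) ω /
            (μ[fun ω' => if s ≤ T ω' then (1:ℝ) else 0|m]) ω :=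
          ((hLsm.mono hm).measurable)
        exact (h1.mul h2).aestronglyMeasurable
      · filter_upwards [hLb] with ω h
        rw [abs_mul]
        by_cases hh : s ≤ T ω ∧ s ≤ C ω
        · rw [if_pos hh]; simpa using h
        · rw [if_neg hh]; simp
    have hsub : μ[M s|m] =ᵐ[μ]
        μ[fun ω => if T ω = s ∧ s ≤ C ω then (1:ℝ) else 0|m] -
        μ[(fun ω => (if s ≤ T ω ∧ s ≤ C ω then (1:ℝ) else 0) *
            ((μ[fun ω' => if T ω' = s then (1:ℝ) else 0|m]) ω /
             (μ[fun ω' => if s ≤ T ω' then (1:ℝ) else 0|m]) ω))|m] :=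
      condExp_sub (intN s) intIL m
    have e : (fun ω => (if s ≤ T ω ∧ s ≤ C ω then (1:ℝ) else 0) *
        ((μ[fun ω' => if T ω' = s then (1:ℝ) else 0|m]) ω /
         (μ[fun ω' => if s ≤ T ω' then (1:ℝ) else 0|m]) ω)) =
        (fun ω => (μ[fun ω' => if T ω' = s then (1:ℝ) else 0|m]) ω /
         (μ[fun ω' => if s ≤ T ω' then (1:ℝ) else 0|m]) ω) *
        (fun ω => if s ≤ T ω ∧ s ≤ C ω then (1:ℝ) else 0) := by
      ext ω; simp [mul_comm]
    have hpull : μ[(fun ω =>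
          (μ[fun ω' => if T ω' = s then (1:ℝ) else 0|m]) ω /
          (μ[fun ω' => if s ≤ T ω' then (1:ℝ) else 0|m]) ω) *
        (fun ω => if s ≤ T ω ∧ s ≤ C ω then (1:ℝ) else 0)|m] =ᵐ[μ]
        (fun ω => (μ[fun ω' => if T ω' = s then (1:ℝ) else 0|m]) ω /
          (μ[fun ω' => if s ≤ T ω' then (1:ℝ) else 0|m]) ω) *
        μ[fun ω => if s ≤ T ω ∧ s ≤ C ω then (1:ℝ) else 0|m] :=
      condExp_mul_of_stronglyMeasurable_left hLsm (e ▸ intIL) (intI s)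
    refine hsub.trans ?_
    rw [e]
    filter_upwards [hNs s, hpull, hIs s, hLfacts] with ω h1 h2 h3 h4
    simp only [Pi.sub_apply]
    rw [h1, h2]
    simp only [Pi.mul_apply]
    rw [h3, ← mul_assoc, (h4 s hst).2, sub_self]
  -- measurability of the weight
  have hWm : ∀ s:ℕ, Measurable[m] (W s) := by
    intro s
    have hg1m : Measurable[m]
        (μ[fun ω' => if Z ω' = 1 then (1:ℝ) else 0|MeasurableSpace.comap X inferInstance]) :=
      (stronglyMeasurable_condExp.mono hXle).measurable
    have hZ1 : MeasurableSet[m] {ω | Z ω = 1} := hZm (measurableSet_singleton 1)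
    have hcFt : Measurable[m] (μ[fun ω' => if T ω' ≤ t then (1:ℝ) else 0|m]) :=
      stronglyMeasurable_condExp.measurable
    have hcFs : Measurable[m] (μ[fun ω' => if T ω' ≤ s then (1:ℝ) else 0|m]) :=
      stronglyMeasurable_condExp.measurable
    have hcC : Measurable[m] (μ[fun ω' => if s ≤ C ω' then (1:ℝ) else 0|m]) :=
      stronglyMeasurable_condExp.measurable
    rw [hW_def]
    exact (((measurable_const.mul hZm).sub measurable_const).div
        (Measurable.ite hZ1 hg1m (measurable_const.sub hg1m))).mul
      ((measurable_const.sub hcFt).div ((measurable_const.sub hcFs).mul hcC))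
  -- measurability and boundedness of the increment
  have hMmeas : ∀ s:ℕ, Measurable[mΩ] (M s) := by
    intro s
    have h1 : Measurable[mΩ] fun ω => if T ω = s ∧ s ≤ C ω then (1:ℝ) else 0 :=
      Measurable.ite ((hT (measurableSet_singleton s)).inter (hC measurableSet_Ici))
        measurable_const measurable_const
    have h2 : Measurable[mΩ] fun ω => if s ≤ T ω ∧ s ≤ C ω then (1:ℝ) else 0 :=
      Measurable.ite ((hT measurableSet_Ici).inter (hC measurableSet_Ici))
        measurable_const measurable_const
    have h3 : Measurable[mΩ] fun ω =>
        (μ[fun ω' => if T ω' = s then (1:ℝ) else 0|m]) ω /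
        (μ[fun ω' => if s ≤ T ω' then (1:ℝ) else 0|m]) ω :=
      ((stronglyMeasurable_condExp.measurable.div
        stronglyMeasurable_condExp.measurable).mono hm le_rfl)
    rw [hM_def]
    exact h1.sub (h2.mul h3)
  have hMb : ∀ s, s ≤ t → ∀ᵐ ω ∂μ, |M s ω| ≤ 2 := by
    intro s hst
    filter_upwards [hLfacts] with ω h
    have hL := (h s hst).1
    rw [hM_def]
    simp only
    have e1 : |if T ω = s ∧ s ≤ C ω then (1:ℝ) else 0| ≤ 1 := by
      by_cases hh : T ω = s ∧ s ≤ C ω <;> simp [hh]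
    have e2 : |(if s ≤ T ω ∧ s ≤ C ω then (1:ℝ) else 0) *
        ((μ[fun ω' => if T ω' = s then (1:ℝ) else 0|m]) ω /
         (μ[fun ω' => if s ≤ T ω' then (1:ℝ) else 0|m]) ω)| ≤ 1 := by
      rw [abs_mul]
      by_cases hh : s ≤ T ω ∧ s ≤ C ω
      · rw [if_pos hh]; simpa using hL
      · rw [if_neg hh]; simp
    calc |_ - _| ≤ |_| + |_| := abs_sub _ _
    _ ≤ 1 + 1 := add_le_add e1 e2
    _ = 2 := by norm_num
  have intM : ∀ s, s ≤ t → Integrable (M s) μ := by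
    intro s hst
    exact intB _ 2 ((hMmeas s).aestronglyMeasurable) (hMb s hst)
  -- DR agrees a.e. with the sum of weighted increments
  have hDR' : DR =ᵐ[μ] fun ω => ∑ s ∈ Finset.range (t+1), W s ω * M s ω := by
    have hFa : ∀ᵐ ω ∂μ, ∀ s:ℕ,
        F s (Z ω, X ω) = (μ[fun ω' => if T ω' ≤ s then (1:ℝ) else 0|m]) ω :=
      ae_all_iff.mpr fun s => hF s
    have hGma : ∀ᵐ ω ∂μ, ∀ s:ℕ,
        Gm s (Z ω, X ω) = (μ[fun ω' => if s ≤ C ω' then (1:ℝ) else 0|m]) ω :=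
      ae_all_iff.mpr fun s => hGm s
    filter_upwards [hFa, hGma, hg1, hlamL] with ω h1 h2 h3 h4
    rw [hDR ω]
    refine Finset.sum_congr rfl fun s hs => ?_
    have hst : s ≤ t := by
      have := Finset.mem_range.mp hs; omega
    simp only [hW_def, hM_def]
    rw [← h1 t, ← h1 s, ← h2 s, ← h3, ← h4 s hst]
    have i1 : (if min (T ω) (C ω) = s ∧ T ω ≤ C ω then (1:ℝ) else 0) =
        if T ω = s ∧ s ≤ C ω then (1:ℝ) else 0 := if_congr (by omega) rfl rfl
    have i2 : (if s ≤ min (T ω) (C ω) then (1:ℝ) else 0) =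
        if s ≤ T ω ∧ s ≤ C ω then (1:ℝ) else 0 := if_congr (by omega) rfl rfl
    rw [i1, i2]
  -- main claim: conditional expectation of DR vanishes
  have hmain : μ[DR|m] =ᵐ[μ] fun _ => (0:ℝ) := by
    have key : ∀ n : ℕ,
        (Set.indicator {ω | ∀ s ∈ Finset.range (t+1), |W s ω| ≤ (n:ℝ)} (μ[DR|m]))
          =ᵐ[μ] fun _ => (0:ℝ) := by
      intro n
      set B : Set Ω := {ω | ∀ s ∈ Finset.range (t+1), |W s ω| ≤ (n:ℝ)} with hB_def
      have hBm : MeasurableSet[m] B := by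
        have e : B = ⋂ s ∈ Finset.range (t+1), {ω | |W s ω| ≤ (n:ℝ)} := by
          ext ω; simp [hB_def, Set.mem_iInter]
        rw [e]
        exact MeasurableSet.biInter (Set.to_countable _)
          fun s _ => measurableSet_le ((hWm s).abs) measurable_const
      have hint_g : ∀ s ∈ Finset.range (t+1),
          Integrable (fun ω => B.indicator (W s) ω * M s ω) μ := by
        intro s hs
        have hst : s ≤ t := by have := Finset.mem_range.mp hs; omega
        refine intB _ ((n:ℝ) * 2) ?_ ?_
        · have h1 : Measurable[mΩ] (B.indicator (W s)) :=
            ((hWm s).indicator hBm).mono hm le_rfl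
          exact (h1.mul (hMmeas s)).aestronglyMeasurable
        · filter_upwards [hMb s hst] with ω hMω
          rw [abs_mul]
          have h1 : |B.indicator (W s) ω| ≤ (n:ℝ) := by
            by_cases hω : ω ∈ B
            · rw [Set.indicator_of_mem hω]; exact hω s hs
            · rw [Set.indicator_of_notMem hω]; simp
          exact mul_le_mul h1 hMω (abs_nonneg _) (by positivity)
      have hcond_g : ∀ s ∈ Finset.range (t+1),
          μ[(fun ω => B.indicator (W s) ω * M s ω)|m] =ᵐ[μ] fun _ => (0:ℝ) := by
        intro s hs
        have hst : s ≤ t := by have := Finset.mem_range.mp hs; omega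
        have hsm : StronglyMeasurable[m] (B.indicator (W s)) :=
          ((hWm s).stronglyMeasurable).indicator hBm
        have e : (fun ω => B.indicator (W s) ω * M s ω) = B.indicator (W s) * M s := rfl
        have hp : μ[B.indicator (W s) * M s|m] =ᵐ[μ] B.indicator (W s) * μ[M s|m] :=
          condExp_mul_of_stronglyMeasurable_left hsm (e ▸ hint_g s hs) (intM s hst)
        rw [e]
        refine hp.trans ?_
        filter_upwards [hM0 s hst] with ω h
        simp only [Pi.mul_apply]
        rw [h, mul_zero]
      have hsum_eq : (fun ω => ∑ s ∈ Finset.range (t+1), B.indicator (W s) ω * M s ω) =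
          ∑ s ∈ Finset.range (t+1), fun ω => B.indicator (W s) ω * M s ω := by
        ext ω; simp
      have hBDR : B.indicator DR =ᵐ[μ]
          fun ω => ∑ s ∈ Finset.range (t+1), B.indicator (W s) ω * M s ω := by
        filter_upwards [hDR'] with ω h
        by_cases hω : ω ∈ B
        · rw [Set.indicator_of_mem hω, h]
          exact Finset.sum_congr rfl fun s hs => by rw [Set.indicator_of_mem hω]
        · rw [Set.indicator_of_notMem hω]
          symm
          exact Finset.sum_eq_zero fun s hs => by
            rw [Set.indicator_of_notMem hω, zero_mul]
      have h1 : μ[B.indicator DR|m] =ᵐ[μ] fun _ => (0:ℝ) := by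
        refine (condExp_congr_ae hBDR).trans ?_
        rw [hsum_eq]
        refine (condExp_finsetSum hint_g m).trans ?_
        have hae : ∀ᵐ ω ∂μ, ∀ s, s ∈ Finset.range (t+1) →
            (μ[(fun ω => B.indicator (W s) ω * M s ω)|m]) ω = 0 := by
          rw [ae_all_iff]
          intro s
          by_cases hs : s ∈ Finset.range (t+1)
          · filter_upwards [hcond_g s hs] with ω h
            intro _; exact h
          · exact ae_of_all _ fun ω h => absurd h hs
        filter_upwards [hae] with ω h
        simp only [Finset.sum_apply]
        exact Finset.sum_eq_zero fun s hs => h s hs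
      exact ((condExp_indicator h_int hBm).symm.trans h1)
    have hall := ae_all_iff.mpr key
    filter_upwards [hall] with ω h
    obtain ⟨n, hn⟩ := exists_nat_ge (∑ s ∈ Finset.range (t+1), |W s ω|)
    have hω : ω ∈ {ω | ∀ s ∈ Finset.range (t+1), |W s ω| ≤ (n:ℝ)} := by
      intro s hs
      exact le_trans (Finset.single_le_sum (f := fun i => |W i ω|)
        (fun i _ => abs_nonneg _) hs) hn
    have h' := h n
    rwa [Set.indicator_of_mem hω] at h'
  refine ⟨hmain, ?_⟩
  rw [← integral_condExp hm (f := DR), integral_congr_ae hmain, integral_zero]
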